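/- arXiv:math-ph/0412004 — 5 statements merged into one kernel-verified Lean document; each statement's English description precedes it below -/
import Mathlib

section
/- Let L be a regular Lagrangian on ℝ^n × (ℝ^n)^k (invertible velocity Hessian). Then every k-vector field X = (X_1,...,X_k) solving Σ_A ι_{X_A}(ω_L)_A = dE_L is a SOPDE, i.e., (X_A)^i = v^i_A for all A, i. -/
open scoped BigOperators

noncomputable section

/-- The coordinate model of `T^1_kQ` (or `(T^1_k)^*Q`): points `(q^i, v^i_A)` (resp. `(q^i, p^A_i)`). -/
abbrev Ek (n k : ℕ) : Type := (Fin n → ℝ) × (Fin k → Fin n → ℝ)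

/-- The coordinate tangent direction `∂/∂q^i`. -/
def Qdir (n k : ℕ) (i : Fin n) : Ek n k := (Pi.single i 1, 0)

/-- The coordinate tangent direction `∂/∂v^i_A` (resp. `∂/∂p^A_i`). -/
def Vdir (n k : ℕ) (A : Fin k) (i : Fin n) : Ek n k :=
  (0, Pi.single A (Pi.single i 1))

/-- The canonical 2-form `(ω₀)_A = Σ_i dq^i ∧ dp^A_i` on `(T^1_k)^*Q`, evaluated on
two tangent vectors. -/
def omegaCan {n k : ℕ} (A : Fin k) (u w : Ek n k) : ℝ :=
  ∑ i, (u.1 i * w.2 A i - w.1 i * u.2 A i)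

/-- The partial derivative `∂L/∂v^i_A`. -/
def Lv {n k : ℕ} (L : Ek n k → ℝ) (A : Fin k) (i : Fin n) (x : Ek n k) : ℝ :=
  fderiv ℝ L x (Vdir n k A i)

/-- The partial derivative `∂L/∂q^i`. -/
def Lq {n k : ℕ} (L : Ek n k → ℝ) (i : Fin n) (x : Ek n k) : ℝ :=
  fderiv ℝ L x (Qdir n k i)

/-- The Lagrangian 2-form `(ω_L)_A = -d((∂L/∂v^i_A) dq^i) = Σ_i dq^i ∧ d(∂L/∂v^i_A)`,
evaluated at `x` on two tangent vectors. -/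
def omegaL {n k : ℕ} (L : Ek n k → ℝ) (A : Fin k) (x : Ek n k) (u w : Ek n k) : ℝ :=
  ∑ i, (u.1 i * fderiv ℝ (Lv L A i) x w - w.1 i * fderiv ℝ (Lv L A i) x u)

/-- The velocity Hessian `(∂²L/∂v^i_A ∂v^j_B)`, as an `(nk)×(nk)` matrix. -/
def Hess {n k : ℕ} (L : Ek n k → ℝ) (x : Ek n k) :
    Matrix (Fin k × Fin n) (Fin k × Fin n) ℝ :=
  fun p q => fderiv ℝ (Lv L p.1 p.2) x (Vdir n k q.1 q.2)

/-- The Legendre map `FL(q,v) = (q, ∂L/∂v)`. -/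
def FLmap {n k : ℕ} (L : Ek n k → ℝ) (x : Ek n k) : Ek n k :=
  (x.1, fun A i => Lv L A i x)

/-- The energy `E_L = Σ_{A,i} v^i_A ∂L/∂v^i_A − L = C(L) − L`. -/
def energy {n k : ℕ} (L : Ek n k → ℝ) (x : Ek n k) : ℝ :=
  (∑ A, ∑ i, x.2 A i * Lv L A i x) - L x

/-- The second partial derivative `∂²L/∂q^j ∂v^i_A` (first in `v^i_A`, then in `q^j`). -/
def D2vq {n k : ℕ} (L : Ek n k → ℝ) (A : Fin k) (i j : Fin n) (x : Ek n k) : ℝ :=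
  fderiv ℝ (Lv L A i) x (Qdir n k j)

/-- The second partial derivative `∂²L/∂v^j_B ∂v^i_A` (first in `v^i_A`, then in `v^j_B`). -/
def D2vv {n k : ℕ} (L : Ek n k → ℝ) (A : Fin k) (i : Fin n) (B : Fin k) (j : Fin n)
    (x : Ek n k) : ℝ :=
  fderiv ℝ (Lv L A i) x (Vdir n k B j)

/-- for a regular Lagrangian, every k-vector field solving
`Σ_A ι_{X_A}(ω_L)_A = dE_L` is a SOPDE: `(X_A)^i = v^i_A`. -/
theorem regular_solution_is_sopde (n k : ℕ) (L : Ek n k → ℝ) (hL : ContDiff ℝ (⊤ : ℕ∞) L)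
    (hreg : ∀ x : Ek n k, (Hess L x).det ≠ 0)
    (X : Fin k → Ek n k → Ek n k)
    (hsol : ∀ (x : Ek n k) (w : Ek n k),
      ∑ A, omegaL L A x (X A x) w = fderiv ℝ (energy L) x w) :
    ∀ (x : Ek n k) (A : Fin k) (i : Fin n), (X A x).1 i = x.2 A i := by
  classical
  intro x A₀ i₀
  have hLd : Differentiable ℝ L := hL.differentiable (by simp)
  have hC : ContDiff ℝ (⊤ : ℕ∞) (fderiv ℝ L) := hL.fderiv_right (by simp)
  have hLv : ∀ (B : Fin k) (j : Fin n), ContDiff ℝ (⊤ : ℕ∞) (Lv L B j) := fun B j =>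
    (ContinuousLinearMap.apply ℝ ℝ (Vdir n k B j)).contDiff.comp hC
  -- projection continuous linear map
  set P : Fin k → Fin n → (Ek n k →L[ℝ] ℝ) := fun B j =>
    (ContinuousLinearMap.proj j).comp ((ContinuousLinearMap.proj B).comp
      (ContinuousLinearMap.snd ℝ (Fin n → ℝ) (Fin k → Fin n → ℝ))) with hPdef
  have hP : ∀ (B : Fin k) (j : Fin n) (u : Ek n k), P B j u = u.2 B j := fun _ _ _ => rfl
  -- derivative of the energy
  have hE : HasFDerivAt (energy L)
      ((∑ B, ∑ j, (x.2 B j • fderiv ℝ (Lv L B j) x + Lv L B j x • P B j))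
        - fderiv ℝ L x) x := by
    have h1 : ∀ (B : Fin k) (j : Fin n), HasFDerivAt (fun y : Ek n k => y.2 B j * Lv L B j y)
        (x.2 B j • fderiv ℝ (Lv L B j) x + Lv L B j x • P B j) x := by
      intro B j
      have hc : HasFDerivAt (fun y : Ek n k => y.2 B j) (P B j) x :=
        (P B j).hasFDerivAt
      have hd : HasFDerivAt (Lv L B j) (fderiv ℝ (Lv L B j) x) x :=
        ((hLv B j).differentiable (by simp) x).hasFDerivAt
      exact hc.mul hd
    have h2 : HasFDerivAt (fun y : Ek n k => ∑ B, ∑ j, y.2 B j * Lv L B j y)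
        (∑ B, ∑ j, (x.2 B j • fderiv ℝ (Lv L B j) x + Lv L B j x • P B j)) x := by
      apply HasFDerivAt.fun_sum
      intro B _
      exact HasFDerivAt.fun_sum (fun j _ => h1 B j)
    exact h2.sub (hLd x).hasFDerivAt
  have hEf : fderiv ℝ (energy L) x
      = (∑ B, ∑ j, (x.2 B j • fderiv ℝ (Lv L B j) x + Lv L B j x • P B j))
        - fderiv ℝ L x := hE.fderiv
  -- key coordinate equation
  have hkey : ∀ (B : Fin k) (j : Fin n),
      ∑ A, ∑ i, ((X A x).1 i - x.2 A i) * Hess L x (A, i) (B, j) = 0 := by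
    intro B j
    have h := hsol x (Vdir n k B j)
    rw [hEf] at h
    have hVdir1 : (Vdir n k B j).1 = 0 := rfl
    have hVdir2 : ∀ (B' : Fin k) (j' : Fin n),
        (Vdir n k B j).2 B' j' = if B' = B ∧ j' = j then 1 else 0 := by
      intro B' j'
      by_cases hB : B' = B <;> by_cases hj : j' = j <;>
        simp [Vdir, Pi.single_apply, hB, hj]
    -- simplify LHS
    have hLHS : ∑ A, omegaL L A x (X A x) (Vdir n k B j)
        = ∑ A, ∑ i, (X A x).1 i * Hess L x (A, i) (B, j) := by
      apply Finset.sum_congr rfl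
      intro A _
      unfold omegaL
      apply Finset.sum_congr rfl
      intro i _
      rw [hVdir1]
      simp [Hess]
    -- simplify RHS
    have hRHS : ((∑ B', ∑ j', (x.2 B' j' • fderiv ℝ (Lv L B' j') x + Lv L B' j' x • P B' j'))
        - fderiv ℝ L x) (Vdir n k B j)
        = ∑ A, ∑ i, x.2 A i * Hess L x (A, i) (B, j) := by
      rw [ContinuousLinearMap.sub_apply]
      rw [ContinuousLinearMap.sum_apply]
      have hsum : ∀ (B' : Fin k), (∑ j', (x.2 B' j' • fderiv ℝ (Lv L B' j') x
          + Lv L B' j' x • P B' j')) (Vdir n k B j)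
          = ∑ j', (x.2 B' j' * Hess L x (B', j') (B, j)
            + Lv L B' j' x * (if B' = B ∧ j' = j then 1 else 0)) := by
        intro B'
        rw [ContinuousLinearMap.sum_apply]
        apply Finset.sum_congr rfl
        intro j' _
        rw [ContinuousLinearMap.add_apply, ContinuousLinearMap.smul_apply,
          ContinuousLinearMap.smul_apply, hP, hVdir2]
        simp [Hess, smul_eq_mul]
      have hfL : fderiv ℝ L x (Vdir n k B j) = Lv L B j x := rfl
      rw [hfL]
      rw [Finset.sum_congr rfl (fun B' _ => hsum B')]
      have hsplit : ∑ B', ∑ j', (x.2 B' j' * Hess L x (B', j') (B, j)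
          + Lv L B' j' x * (if B' = B ∧ j' = j then 1 else 0))
          = (∑ B', ∑ j', x.2 B' j' * Hess L x (B', j') (B, j))
            + ∑ B', ∑ j', Lv L B' j' x * (if B' = B ∧ j' = j then 1 else 0) := by
        rw [← Finset.sum_add_distrib]
        apply Finset.sum_congr rfl
        intro B' _
        rw [← Finset.sum_add_distrib]
      rw [hsplit]
      have hdelta : ∑ B', ∑ j', Lv L B' j' x * (if B' = B ∧ j' = j then 1 else 0)
          = Lv L B j x := by
        rw [Finset.sum_eq_single B]
        · rw [Finset.sum_eq_single j]
          · simp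
          · intro j' _ hj'; simp [hj']
          · simp
        · intro B' _ hB'; simp [hB']
        · simp
      rw [hdelta]
      ring
    rw [hLHS, hRHS] at h
    have : ∑ A, ∑ i, ((X A x).1 i - x.2 A i) * Hess L x (A, i) (B, j)
        = (∑ A, ∑ i, (X A x).1 i * Hess L x (A, i) (B, j))
          - ∑ A, ∑ i, x.2 A i * Hess L x (A, i) (B, j) := by
      rw [← Finset.sum_sub_distrib]
      apply Finset.sum_congr rfl
      intro A _
      rw [← Finset.sum_sub_distrib]
      apply Finset.sum_congr rfl
      intro i _
      ring
    rw [this, h, sub_self]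
  -- linear algebra: invertible Hessian forces the coefficient vector to vanish
  set c : Fin k × Fin n → ℝ := fun p => (X p.1 x).1 p.2 - x.2 p.1 p.2 with hcdef
  have hvm : Matrix.vecMul c (Hess L x) = 0 := by
    funext q
    have := hkey q.1 q.2
    simp only [Matrix.vecMul, dotProduct, Pi.zero_apply]
    rw [Fintype.sum_prod_type]
    simpa [hcdef] using this
  have hunit : IsUnit (Hess L x).det := isUnit_iff_ne_zero.mpr (hreg x)
  have hc0 : c = 0 := by
    have h1 : Matrix.vecMul (Matrix.vecMul c (Hess L x)) (Hess L x)⁻¹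
        = Matrix.vecMul c ((Hess L x) * (Hess L x)⁻¹) := Matrix.vecMul_vecMul c _ _
    rw [hvm, Matrix.mul_nonsing_inv _ hunit, Matrix.vecMul_one] at h1
    rw [← h1]
    funext q
    simp [Matrix.vecMul, dotProduct]
  have := congrFun hc0 (A₀, i₀)
  simp only [hcdef, Pi.zero_apply] at this
  linarith

end
end

section
/- Let X = (X_1,...,X_k) be an integrable SOPDE solving Σ_A ι_{X_A}(ω_L)_A = dE_L, and let ψ = φ^{(1)} : ℝ^k → ℝ^n × (ℝ^n)^k be an integral section with base map φ : ℝ^k → ℝ^n. Then φ satisfies the Euler-Lagrange field equations: Σ_{A=1}^k d/dt^A (∂L/∂v^i_A ∘ φ^{(1)}) = ∂L/∂q^i ∘ φ^{(1)} for each i. -/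
open scoped BigOperators

noncomputable section

/-- The continuous linear evaluation `x ↦ x.2 B j`. -/
def ev2 (n k : ℕ) (B : Fin k) (j : Fin n) : Ek n k →L[ℝ] ℝ :=
  (ContinuousLinearMap.proj j : (Fin n → ℝ) →L[ℝ] ℝ).comp
    (((ContinuousLinearMap.proj B : (Fin k → Fin n → ℝ) →L[ℝ] (Fin n → ℝ))).comp
      (ContinuousLinearMap.snd ℝ (Fin n → ℝ) (Fin k → Fin n → ℝ)))

lemma Lv_smooth {n k : ℕ} (L : Ek n k → ℝ) (hL : ContDiff ℝ (⊤ : ℕ∞) L) (A : Fin k) (i : Fin n) :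
    ContDiff ℝ (⊤ : ℕ∞) (Lv L A i) :=
  (hL.fderiv_right (by simp)).clm_apply contDiff_const

lemma key_identity {n k : ℕ} (L : Ek n k → ℝ) (hL : ContDiff ℝ (⊤ : ℕ∞) L)
    (X : Fin k → Ek n k → Ek n k)
    (hsopde : ∀ (x : Ek n k) (A : Fin k) (i : Fin n), (X A x).1 i = x.2 A i)
    (hsol : ∀ (x : Ek n k) (w : Ek n k),
      ∑ A, omegaL L A x (X A x) w = fderiv ℝ (energy L) x w)
    (x : Ek n k) (i : Fin n) :
    ∑ A, fderiv ℝ (Lv L A i) x (X A x) = Lq L i x := by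
  have hLv : ∀ (B : Fin k) (j : Fin n), DifferentiableAt ℝ (Lv L B j) x :=
    fun B j => ((Lv_smooth L hL B j).differentiable (by simp)) x
  -- derivative of the energy
  have hC : HasFDerivAt (energy L)
      ((∑ B : Fin k, ∑ j : Fin n,
        (x.2 B j • fderiv ℝ (Lv L B j) x + Lv L B j x • ev2 n k B j)) -
        fderiv ℝ L x) x := by
    have h1 : HasFDerivAt (fun y : Ek n k => ∑ B : Fin k, ∑ j : Fin n, y.2 B j * Lv L B j y)
        (∑ B : Fin k, ∑ j : Fin n,
          (x.2 B j • fderiv ℝ (Lv L B j) x + Lv L B j x • ev2 n k B j)) x := by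
      apply HasFDerivAt.fun_sum; intro B _
      apply HasFDerivAt.fun_sum; intro j _
      have hb : HasFDerivAt (fun y : Ek n k => y.2 B j) (ev2 n k B j) x :=
        (ev2 n k B j).hasFDerivAt
      exact hb.mul ((hLv B j).hasFDerivAt)
    exact h1.sub ((hL.differentiable (by simp)) x).hasFDerivAt
  have hE : fderiv ℝ (energy L) x (Qdir n k i)
      = (∑ B : Fin k, ∑ j : Fin n, x.2 B j * fderiv ℝ (Lv L B j) x (Qdir n k i)) -
        Lq L i x := by
    rw [hC.fderiv]
    simp [ev2, Qdir, Lq, ContinuousLinearMap.sum_apply]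
  have hs := hsol x (Qdir n k i)
  rw [hE] at hs
  unfold omegaL at hs
  have hsingle : ∀ (f : Fin n → ℝ), ∑ j, (Pi.single i 1 : Fin n → ℝ) j * f j = f i := by
    intro f
    rw [Finset.sum_eq_single i]
    · simp
    · intro b _ hb; simp [Pi.single_apply, hb]
    · simp
  have hterm : ∀ A : Fin k,
      (∑ j, ((X A x).1 j * fderiv ℝ (Lv L A j) x (Qdir n k i)
        - (Qdir n k i).1 j * fderiv ℝ (Lv L A j) x (X A x)))
      = (∑ j, x.2 A j * fderiv ℝ (Lv L A j) x (Qdir n k i))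
        - fderiv ℝ (Lv L A i) x (X A x) := by
    intro A
    rw [Finset.sum_sub_distrib]
    congr 1
    · exact Finset.sum_congr rfl fun j _ => by rw [hsopde]
    · exact hsingle _
  rw [Finset.sum_congr rfl fun A _ => hterm A, Finset.sum_sub_distrib] at hs
  linarith

/-- if `X` is an integrable SOPDE solving `Σ_A ι_{X_A}(ω_L)_A = dE_L` and
`ψ = φ^{(1)}` is an integral section with base map `φ`, then `φ` satisfies the Euler–Lagrange
field equations `Σ_A d/dt^A (∂L/∂v^i_A ∘ φ^{(1)}) = ∂L/∂q^i ∘ φ^{(1)}`. -/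
theorem integral_section_solves_EL (n k : ℕ) (L : Ek n k → ℝ) (hL : ContDiff ℝ (⊤ : ℕ∞) L)
    (X : Fin k → Ek n k → Ek n k)
    (hsopde : ∀ (x : Ek n k) (A : Fin k) (i : Fin n), (X A x).1 i = x.2 A i)
    (hsol : ∀ (x : Ek n k) (w : Ek n k),
      ∑ A, omegaL L A x (X A x) w = fderiv ℝ (energy L) x w)
    (φ : (Fin k → ℝ) → Fin n → ℝ) (ψ : (Fin k → ℝ) → Ek n k)
    (hψ : ∀ t, ψ t = (φ t, fun A i => fderiv ℝ (fun s => φ s i) t (Pi.single A 1)))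
    (hdiff : Differentiable ℝ ψ)
    (hint : ∀ (t : Fin k → ℝ) (A : Fin k), fderiv ℝ ψ t (Pi.single A 1) = X A (ψ t)) :
    ∀ (t : Fin k → ℝ) (i : Fin n),
      ∑ A, fderiv ℝ (fun s => Lv L A i (ψ s)) t (Pi.single A 1) = Lq L i (ψ t) := by
  intro t i
  have hchain : ∀ A : Fin k,
      fderiv ℝ (fun s => Lv L A i (ψ s)) t (Pi.single A 1)
        = fderiv ℝ (Lv L A i) (ψ t) (X A (ψ t)) := by
    intro A
    have hLvA : DifferentiableAt ℝ (Lv L A i) (ψ t) :=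
      ((Lv_smooth L hL A i).differentiable (by simp)) (ψ t)
    rw [show (fun s => Lv L A i (ψ s)) = (Lv L A i) ∘ ψ from rfl,
      fderiv_comp t hLvA (hdiff t)]
    simp [hint t A]
  rw [Finset.sum_congr rfl fun A _ => hchain A]
  exact key_identity L hL X hsopde hsol (ψ t) i

end
end

section
/- On W = (ℝ^n × (ℝ^n)^k) ⊕ (ℝ^n)^k with coordinates (q^i, v^i_A, p^A_i), define Ω_A = Σ_i dq^i ∧ dp^A_i, H = Σ_{A,i} p^A_i v^i_A − L(q,v), and let Z_A = (Z_A)^i ∂/∂q^i + (Z_A)^i_B ∂/∂v^i_B + (Z_A)^B_i ∂/∂p^B_i. Then Σ_{A=1}^k ι_{Z_A} Ω_A = dH holds if and only if: (a) p^A_i = ∂L/∂v^i_A for all A, i (constraint equations); (b) (Z_A)^i = v^i_A for all A, i (holonomy condition); (c) Σ_{A=1}^k (Z_A)^A_i = ∂L/∂q^i for all i. -/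
open scoped BigOperators

noncomputable section

/-- The coordinate model of the Whitney sum `T^1_kQ ⊕_Q (T^1_k)^*Q`: points `(q^i, v^i_A, p^A_i)`. -/
abbrev Wk (n k : ℕ) : Type := (Fin n → ℝ) × (Fin k → Fin n → ℝ) × (Fin k → Fin n → ℝ)

/-- `Ω_A = Σ_i dq^i ∧ dp^A_i` on the Whitney sum, evaluated on two tangent vectors. -/
def OmegaW {n k : ℕ} (A : Fin k) (u w : Wk n k) : ℝ :=
  ∑ i, (u.1 i * w.2.2 A i - w.1 i * u.2.2 A i)

/-- The Skinner–Rusk Hamiltonian `H = Σ_{A,i} p^A_i v^i_A − L(q,v)`. -/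
def HSR {n k : ℕ} (L : Ek n k → ℝ) (x : Wk n k) : ℝ :=
  (∑ A, ∑ i, x.2.2 A i * x.2.1 A i) - L (x.1, x.2.1)

/-- The constraint submanifold `M_L = {(q,v,p) : p^A_i = ∂L/∂v^i_A}`. -/
def ML {n k : ℕ} (L : Ek n k → ℝ) : Set (Wk n k) :=
  {x | ∀ (A : Fin k) (i : Fin n), x.2.2 A i = Lv L A i (x.1, x.2.1)}

section Aux

variable {n k : ℕ}

/-- projection onto `q^i` factor... not needed actually. -/
def P2' (n k : ℕ) (A : Fin k) (i : Fin n) : Wk n k →L[ℝ] ℝ :=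
  (ContinuousLinearMap.proj (R := ℝ) (φ := fun _ : Fin n => ℝ) i).comp
    ((ContinuousLinearMap.proj (R := ℝ) (φ := fun _ : Fin k => Fin n → ℝ) A).comp
      ((ContinuousLinearMap.fst ℝ _ _).comp (ContinuousLinearMap.snd ℝ (Fin n → ℝ) _)))

def P3' (n k : ℕ) (A : Fin k) (i : Fin n) : Wk n k →L[ℝ] ℝ :=
  (ContinuousLinearMap.proj (R := ℝ) (φ := fun _ : Fin n => ℝ) i).comp
    ((ContinuousLinearMap.proj (R := ℝ) (φ := fun _ : Fin k => Fin n → ℝ) A).comp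
      ((ContinuousLinearMap.snd ℝ _ _).comp (ContinuousLinearMap.snd ℝ (Fin n → ℝ) _)))

def prW (n k : ℕ) : Wk n k →L[ℝ] Ek n k :=
  (ContinuousLinearMap.fst ℝ _ _).prod
    ((ContinuousLinearMap.fst ℝ _ _).comp (ContinuousLinearMap.snd ℝ (Fin n → ℝ) _))

@[simp] lemma P2'_apply (A : Fin k) (i : Fin n) (w : Wk n k) : P2' n k A i w = w.2.1 A i := rfl
@[simp] lemma P3'_apply (A : Fin k) (i : Fin n) (w : Wk n k) : P3' n k A i w = w.2.2 A i := rfl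
@[simp] lemma prW_apply (w : Wk n k) : prW n k w = (w.1, w.2.1) := rfl

lemma ek_decomp (u : Ek n k) :
    u = (∑ i, u.1 i • Qdir n k i) + ∑ A, ∑ i, u.2 A i • Vdir n k A i := by
  refine Prod.ext ?_ ?_
  · simp only [Prod.fst_add, Prod.fst_sum, Qdir, Vdir, Prod.smul_fst, smul_zero,
      Finset.sum_const_zero, add_zero]
    funext j
    simp [Pi.single_apply, Finset.sum_apply]
  · simp only [Prod.snd_add, Prod.snd_sum, Qdir, Vdir, Prod.smul_snd, smul_zero,
      Finset.sum_const_zero, zero_add]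
    funext B j
    simp [Pi.single_apply, Finset.sum_apply, ite_apply, Finset.sum_ite_eq]

lemma fderiv_expand (L : Ek n k → ℝ) (y : Ek n k) (u : Ek n k) :
    fderiv ℝ L y u = (∑ i, u.1 i * Lq L i y) + ∑ A, ∑ i, u.2 A i * Lv L A i y := by
  conv_lhs => rw [ek_decomp u]
  rw [map_add, map_sum]
  simp [map_sum, Lq, Lv, smul_eq_mul]

lemma hasFDerivAt_HSR (L : Ek n k → ℝ) (hL : ContDiff ℝ (⊤ : ℕ∞) L) (x : Wk n k) :
    HasFDerivAt (HSR L)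
      ((∑ A, ∑ i, (x.2.2 A i • P2' n k A i + x.2.1 A i • P3' n k A i))
        - (fderiv ℝ L (x.1, x.2.1)).comp (prW n k)) x := by
  have h1 : HasFDerivAt (fun y : Wk n k => ∑ A, ∑ i, y.2.2 A i * y.2.1 A i)
      (∑ A, ∑ i, (x.2.2 A i • P2' n k A i + x.2.1 A i • P3' n k A i)) x := by
    refine HasFDerivAt.fun_sum fun A _ => HasFDerivAt.fun_sum fun i _ => ?_
    exact (P3' n k A i).hasFDerivAt.mul (P2' n k A i).hasFDerivAt
  have h2 : HasFDerivAt (fun y : Wk n k => L (y.1, y.2.1))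
      ((fderiv ℝ L (x.1, x.2.1)).comp (prW n k)) x := by
    have := ((hL.differentiable (by simp)) (x.1, x.2.1)).hasFDerivAt.comp x
      (prW n k).hasFDerivAt
    exact this
  exact h1.sub h2

lemma fderiv_HSR_apply (L : Ek n k → ℝ) (hL : ContDiff ℝ (⊤ : ℕ∞) L) (x : Wk n k) (w : Wk n k) :
    fderiv ℝ (HSR L) x w =
      (∑ A, ∑ i, (x.2.2 A i * w.2.1 A i + x.2.1 A i * w.2.2 A i))
        - ((∑ i, w.1 i * Lq L i (x.1, x.2.1))
            + ∑ A, ∑ i, w.2.1 A i * Lv L A i (x.1, x.2.1)) := by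
  rw [(hasFDerivAt_HSR L hL x).fderiv]
  simp only [ContinuousLinearMap.sub_apply, ContinuousLinearMap.sum_apply,
    ContinuousLinearMap.add_apply, ContinuousLinearMap.smul_apply, P2'_apply, P3'_apply,
    ContinuousLinearMap.comp_apply, prW_apply, smul_eq_mul]
  rw [fderiv_expand]

end Aux

/-- the Skinner–Rusk equation `Σ_A ι_{Z_A} Ω_A = dH` at a point is equivalent to
(a) the constraint equations `p^A_i = ∂L/∂v^i_A`, (b) the holonomy condition `(Z_A)^i = v^i_A`,
and (c) `Σ_A (Z_A)^A_i = ∂L/∂q^i`. -/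
theorem skinner_rusk_equation_iff (n k : ℕ) (L : Ek n k → ℝ) (hL : ContDiff ℝ (⊤ : ℕ∞) L)
    (Z : Fin k → Wk n k → Wk n k) (x : Wk n k) :
    (∀ w : Wk n k, ∑ A, OmegaW A (Z A x) w = fderiv ℝ (HSR L) x w) ↔
      ((∀ (A : Fin k) (i : Fin n), x.2.2 A i = Lv L A i (x.1, x.2.1)) ∧
       (∀ (A : Fin k) (i : Fin n), (Z A x).1 i = x.2.1 A i) ∧
       (∀ i : Fin n, ∑ A, (Z A x).2.2 A i = Lq L i (x.1, x.2.1))) := by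
  constructor
  · intro h
    refine ⟨fun A i => ?_, fun A i => ?_, fun i => ?_⟩
    · have hw := h (0, Pi.single A (Pi.single i 1), 0)
      rw [fderiv_HSR_apply L hL] at hw
      simp only [OmegaW] at hw
      simp [Pi.single_apply, mul_ite, ite_mul, ite_apply, Finset.sum_ite_eq, Finset.sum_ite_eq'] at hw
      linarith
    · have hw := h (0, 0, Pi.single A (Pi.single i 1))
      rw [fderiv_HSR_apply L hL] at hw
      simp only [OmegaW] at hw
      simp [Pi.single_apply, mul_ite, ite_mul, ite_apply, Finset.sum_ite_eq, Finset.sum_ite_eq'] at hw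
      linarith
    · have hw := h (Pi.single i 1, 0, 0)
      rw [fderiv_HSR_apply L hL] at hw
      simp only [OmegaW] at hw
      simp [Pi.single_apply, mul_ite, ite_mul, ite_apply, Finset.sum_ite_eq, Finset.sum_ite_eq'] at hw
      linarith
  · rintro ⟨ha, hb, hc⟩ w
    rw [fderiv_HSR_apply L hL]
    simp only [OmegaW, Finset.sum_sub_distrib, Finset.sum_add_distrib]
    have hA : ∑ A, ∑ i, x.2.2 A i * w.2.1 A i
        = ∑ A, ∑ i, w.2.1 A i * Lv L A i (x.1, x.2.1) := by
      refine Finset.sum_congr rfl fun A _ => Finset.sum_congr rfl fun i _ => ?_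
      rw [ha A i, mul_comm]
    have hB : ∑ A, ∑ i, (Z A x).1 i * w.2.2 A i = ∑ A, ∑ i, x.2.1 A i * w.2.2 A i := by
      refine Finset.sum_congr rfl fun A _ => Finset.sum_congr rfl fun i _ => ?_
      rw [hb A i]
    have hC : ∑ A, ∑ i, w.1 i * (Z A x).2.2 A i = ∑ i, w.1 i * Lq L i (x.1, x.2.1) := by
      rw [Finset.sum_comm]
      refine Finset.sum_congr rfl fun i _ => ?_
      rw [← Finset.mul_sum, hc i]
    rw [hA, hB, hC]
    ring

end
end

section
/- Let Z = (Z_1,...,Z_k) be an integrable k-vector field on W = ℝ^n × (ℝ^n)^k × (ℝ^n)^k solving the Skinner-Rusk equation Σ_A ι_{Z_A}Ω_A = dH, and let ψ(t) = (ψ^i(t), ψ^i_A(t), ψ^A_i(t)) be an integral section taking values in M_L. Then ψ^i_A = ∂ψ^i/∂t^A, ψ^A_i = (∂L/∂v^i_A) ∘ ψ_L where ψ_L = (ψ^i, ψ^i_A), and the base map φ = (ψ^i) satisfies the Euler-Lagrange equations Σ_A ∂/∂t^A (∂L/∂v^i_A ∘ ψ_L) = ∂L/∂q^i ∘ ψ_L.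 -/
open scoped BigOperators

noncomputable section

section Aux

variable {n k : ℕ}

/-- coordinate projection `x ↦ x.1 i` as a CLM. -/
def cQW (n k : ℕ) (i : Fin n) : Wk n k →L[ℝ] ℝ :=
  (ContinuousLinearMap.proj (R := ℝ) (φ := fun _ : Fin n => ℝ) i).comp
    (ContinuousLinearMap.fst ℝ (Fin n → ℝ) ((Fin k → Fin n → ℝ) × (Fin k → Fin n → ℝ)))

/-- coordinate projection `x ↦ x.2.1 A i` as a CLM. -/
def cVW (n k : ℕ) (A : Fin k) (i : Fin n) : Wk n k →L[ℝ] ℝ :=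
  (ContinuousLinearMap.proj (R := ℝ) (φ := fun _ : Fin n => ℝ) i).comp
    ((ContinuousLinearMap.proj (R := ℝ) (φ := fun _ : Fin k => Fin n → ℝ) A).comp
      ((ContinuousLinearMap.fst ℝ (Fin k → Fin n → ℝ) (Fin k → Fin n → ℝ)).comp
        (ContinuousLinearMap.snd ℝ (Fin n → ℝ) ((Fin k → Fin n → ℝ) × (Fin k → Fin n → ℝ)))))

/-- coordinate projection `x ↦ x.2.2 A i` as a CLM. -/
def cPW (n k : ℕ) (A : Fin k) (i : Fin n) : Wk n k →L[ℝ] ℝ :=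
  (ContinuousLinearMap.proj (R := ℝ) (φ := fun _ : Fin n => ℝ) i).comp
    ((ContinuousLinearMap.proj (R := ℝ) (φ := fun _ : Fin k => Fin n → ℝ) A).comp
      ((ContinuousLinearMap.snd ℝ (Fin k → Fin n → ℝ) (Fin k → Fin n → ℝ)).comp
        (ContinuousLinearMap.snd ℝ (Fin n → ℝ) ((Fin k → Fin n → ℝ) × (Fin k → Fin n → ℝ)))))

/-- projection `(q,v,p) ↦ (q,v)` as a CLM. -/
def piW (n k : ℕ) : Wk n k →L[ℝ] Ek n k :=
  (ContinuousLinearMap.fst ℝ (Fin n → ℝ) ((Fin k → Fin n → ℝ) × (Fin k → Fin n → ℝ))).prod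
    ((ContinuousLinearMap.fst ℝ (Fin k → Fin n → ℝ) (Fin k → Fin n → ℝ)).comp
      (ContinuousLinearMap.snd ℝ (Fin n → ℝ) ((Fin k → Fin n → ℝ) × (Fin k → Fin n → ℝ))))

lemma cQW_apply (i : Fin n) (x : Wk n k) : cQW n k i x = x.1 i := rfl
lemma cVW_apply (A : Fin k) (i : Fin n) (x : Wk n k) : cVW n k A i x = x.2.1 A i := rfl
lemma cPW_apply (A : Fin k) (i : Fin n) (x : Wk n k) : cPW n k A i x = x.2.2 A i := rfl
lemma piW_apply (x : Wk n k) : piW n k x = (x.1, x.2.1) := rfl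

lemma hsr_diff (L : Ek n k → ℝ) (hL : ContDiff ℝ (⊤ : ℕ∞) L) :
    Differentiable ℝ (HSR L) := by
  have h1 : Differentiable ℝ (fun x : Wk n k => ∑ A, ∑ i, x.2.2 A i * x.2.1 A i) := by
    apply Differentiable.fun_sum; intro A _
    apply Differentiable.fun_sum; intro i _
    exact (cPW n k A i).differentiable.mul (cVW n k A i).differentiable
  have h2 : Differentiable ℝ (fun x : Wk n k => L (x.1, x.2.1)) :=
    (hL.differentiable (by simp)).comp (piW n k).differentiable
  exact h1.sub h2

lemma dirDeriv {E : Type*} [NormedAddCommGroup E] [NormedSpace ℝ E]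
    {F : E → ℝ} {x : E} (hF : DifferentiableAt ℝ F x) (w : E) :
    HasDerivAt (fun s : ℝ => F (x + s • w)) (fderiv ℝ F x w) 0 := by
  have hline : HasDerivAt (fun s : ℝ => x + s • w) w 0 := by
    simpa using ((hasDerivAt_id (0 : ℝ)).smul_const w).const_add x
  have hF' : HasFDerivAt F (fderiv ℝ F x) ((fun s : ℝ => x + s • w) 0) := by
    simpa using hF.hasFDerivAt
  exact hF'.comp_hasDerivAt 0 hline

lemma factA (L : Ek n k → ℝ) (hL : ContDiff ℝ (⊤ : ℕ∞) L) (x : Wk n k) (A : Fin k) (i : Fin n) :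
    fderiv ℝ (HSR L) x ((0, 0, Pi.single A (Pi.single i 1)) : Wk n k) = x.2.1 A i := by
  have hd := dirDeriv ((hsr_diff L hL) x) ((0, 0, Pi.single A (Pi.single i 1)) : Wk n k)
  have h2 : HasDerivAt
      (fun s : ℝ => HSR L (x + s • ((0, 0, Pi.single A (Pi.single i 1)) : Wk n k)))
      (x.2.1 A i) 0 := by
    have heq : (fun s : ℝ => HSR L (x + s • ((0, 0, Pi.single A (Pi.single i 1)) : Wk n k)))
        = fun s : ℝ => HSR L x + s * x.2.1 A i := by
      funext s
      simp only [HSR, Prod.fst_add, Prod.snd_add, Prod.smul_fst, Prod.smul_snd,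
        smul_zero, add_zero, Pi.add_apply, Pi.smul_apply, smul_eq_mul, Pi.zero_apply]
      have : ∀ s : ℝ, ∑ A', ∑ i',
          (x.2.2 A' i' + s * (Pi.single A (Pi.single i 1) : Fin k → Fin n → ℝ) A' i') * x.2.1 A' i'
          = (∑ A', ∑ i', x.2.2 A' i' * x.2.1 A' i') + s * x.2.1 A i := by
        intro s
        have : ∀ A' i', (x.2.2 A' i' + s * (Pi.single A (Pi.single i 1) : Fin k → Fin n → ℝ) A' i') * x.2.1 A' i'
            = x.2.2 A' i' * x.2.1 A' i'
              + s * ((Pi.single A (Pi.single i 1) : Fin k → Fin n → ℝ) A' i' * x.2.1 A' i') := by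
          intro A' i'; ring
        simp only [this, Finset.sum_add_distrib, ← Finset.mul_sum]
        congr 1
        congr 1
        simp [Pi.single_apply, ite_apply, ite_mul, Finset.sum_ite_eq']
      rw [this s]
      ring
    rw [heq]
    simpa using ((hasDerivAt_id (0 : ℝ)).mul_const (x.2.1 A i)).const_add (HSR L x)
  exact hd.unique h2

lemma factB (L : Ek n k → ℝ) (hL : ContDiff ℝ (⊤ : ℕ∞) L) (x : Wk n k) (i : Fin n) :
    fderiv ℝ (HSR L) x ((Pi.single i 1, 0, 0) : Wk n k) = - Lq L i (x.1, x.2.1) := by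
  have hd := dirDeriv ((hsr_diff L hL) x) ((Pi.single i 1, 0, 0) : Wk n k)
  have h2 : HasDerivAt
      (fun s : ℝ => HSR L (x + s • ((Pi.single i 1, 0, 0) : Wk n k)))
      (- Lq L i (x.1, x.2.1)) 0 := by
    have heq : (fun s : ℝ => HSR L (x + s • ((Pi.single i 1, 0, 0) : Wk n k)))
        = fun s : ℝ => (∑ A, ∑ j, x.2.2 A j * x.2.1 A j)
            - L (x.1 + s • (Pi.single i 1 : Fin n → ℝ), x.2.1) := by
      funext s
      simp [HSR]
    rw [heq]
    have hline' : HasDerivAt (fun s : ℝ => ((x.1 + s • (Pi.single i 1 : Fin n → ℝ), x.2.1) : Ek n k))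
        ((Pi.single i 1, 0) : Ek n k) 0 := by
      simpa using (((hasDerivAt_id (0 : ℝ)).smul_const (Pi.single i 1 : Fin n → ℝ)).const_add x.1).prodMk
        (hasDerivAt_const 0 x.2.1)
    have hLd : HasFDerivAt L (fderiv ℝ L (x.1, x.2.1))
        ((fun s : ℝ => ((x.1 + s • (Pi.single i 1 : Fin n → ℝ), x.2.1) : Ek n k)) 0) := by
      simpa using (hL.differentiable (by simp) (x.1, x.2.1)).hasFDerivAt
    have hcomp := hLd.comp_hasDerivAt 0 hline'
    have := (hasDerivAt_const (0 : ℝ) (∑ A, ∑ j, x.2.2 A j * x.2.1 A j)).sub hcomp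
    rw [zero_sub] at this
    exact this
  exact hd.unique h2

lemma fderiv_clm_comp' {F : Type*} [NormedAddCommGroup F] [NormedSpace ℝ F]
    (c : Wk n k →L[ℝ] F) (ψ : (Fin k → ℝ) → Wk n k) (hdiff : Differentiable ℝ ψ)
    (t v : Fin k → ℝ) :
    fderiv ℝ (fun s => c (ψ s)) t v = c (fderiv ℝ ψ t v) := by
  have h := (c.hasFDerivAt.comp t (hdiff t).hasFDerivAt).fderiv
  have heq : (fun s => c (ψ s)) = ⇑c ∘ ψ := rfl
  rw [heq, h]
  rfl

end Aux

/-- an integral section `ψ = (ψ^i, ψ^i_A, ψ^A_i)` with values in `M_L` of an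
integrable solution `Z` of the Skinner–Rusk equation satisfies `ψ^i_A = ∂ψ^i/∂t^A`,
`ψ^A_i = ∂L/∂v^i_A ∘ ψ_L`, and its base map solves the Euler–Lagrange equations. -/
theorem skinner_rusk_integral_section (n k : ℕ) (L : Ek n k → ℝ) (hL : ContDiff ℝ (⊤ : ℕ∞) L)
    (Z : Fin k → Wk n k → Wk n k)
    (hsol : ∀ x ∈ ML L, ∀ w : Wk n k, ∑ A, OmegaW A (Z A x) w = fderiv ℝ (HSR L) x w)
    (ψ : (Fin k → ℝ) → Wk n k) (hdiff : Differentiable ℝ ψ)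
    (hml : ∀ t, ψ t ∈ ML L)
    (hint : ∀ (t : Fin k → ℝ) (A : Fin k), fderiv ℝ ψ t (Pi.single A 1) = Z A (ψ t)) :
    (∀ (t : Fin k → ℝ) (A : Fin k) (i : Fin n),
      (ψ t).2.1 A i = fderiv ℝ (fun s => (ψ s).1 i) t (Pi.single A 1)) ∧
    (∀ (t : Fin k → ℝ) (A : Fin k) (i : Fin n),
      (ψ t).2.2 A i = Lv L A i ((ψ t).1, (ψ t).2.1)) ∧
    (∀ (t : Fin k → ℝ) (i : Fin n),
      ∑ A, fderiv ℝ (fun s => Lv L A i ((ψ s).1, (ψ s).2.1)) t (Pi.single A 1)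
        = Lq L i ((ψ t).1, (ψ t).2.1)) := by
  -- from `hsol` at the `p`-direction: `(Z_A x)^i = v^i_A`
  have key1 : ∀ x ∈ ML L, ∀ (A : Fin k) (i : Fin n), (Z A x).1 i = x.2.1 A i := by
    intro x hx A i
    have h := hsol x hx ((0, 0, Pi.single A (Pi.single i 1)) : Wk n k)
    rw [factA L hL x A i] at h
    simpa [OmegaW, Pi.single_apply, ite_apply, mul_ite, Finset.sum_ite_eq'] using h
  -- from `hsol` at the `q`-direction: `Σ_A (Z_A x)^A_i = ∂L/∂q^i`
  have key2 : ∀ x ∈ ML L, ∀ i : Fin n,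
      ∑ A, (Z A x).2.2 A i = Lq L i (x.1, x.2.1) := by
    intro x hx i
    have h := hsol x hx ((Pi.single i 1, 0, 0) : Wk n k)
    rw [factB L hL x i] at h
    have h' : -∑ A, (Z A x).2.2 A i = - Lq L i (x.1, x.2.1) := by
      rw [← h]
      simp [OmegaW, Pi.single_apply, ite_mul, Finset.sum_ite_eq']
    linarith
  -- coordinate derivatives of ψ
  have hc1 : ∀ (t : Fin k → ℝ) (A : Fin k) (i : Fin n),
      fderiv ℝ (fun s => (ψ s).1 i) t (Pi.single A 1) = (Z A (ψ t)).1 i := by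
    intro t A i
    have : (fun s => (ψ s).1 i) = fun s => cQW n k i (ψ s) := rfl
    rw [this, fderiv_clm_comp' _ _ hdiff, hint, cQW_apply]
  have hc3 : ∀ (t : Fin k → ℝ) (A : Fin k) (i : Fin n),
      fderiv ℝ (fun s => (ψ s).2.2 A i) t (Pi.single A 1) = (Z A (ψ t)).2.2 A i := by
    intro t A i
    have : (fun s => (ψ s).2.2 A i) = fun s => cPW n k A i (ψ s) := rfl
    rw [this, fderiv_clm_comp' _ _ hdiff, hint, cPW_apply]
  refine ⟨?_, ?_, ?_⟩
  · intro t A i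
    rw [hc1 t A i, key1 (ψ t) (hml t) A i]
  · intro t A i
    exact hml t A i
  · intro t i
    have hfun : ∀ A : Fin k, (fun s => Lv L A i ((ψ s).1, (ψ s).2.1))
        = fun s => (ψ s).2.2 A i := by
      intro A; funext s; exact (hml s A i).symm
    calc ∑ A, fderiv ℝ (fun s => Lv L A i ((ψ s).1, (ψ s).2.1)) t (Pi.single A 1)
        = ∑ A, (Z A (ψ t)).2.2 A i := by
          refine Finset.sum_congr rfl fun A _ => ?_
          rw [hfun A, hc3 t A i]
      _ = Lq L i ((ψ t).1, (ψ t).2.1) := key2 (ψ t) (hml t) i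

end
end

section
/- Under the hypotheses of the previous identity (regular L, H ∘ FL = E_L locally), if ψ_L : ℝ^k → ℝ^n × (ℝ^n)^k is the first prolongation of a solution φ of the Euler-Lagrange equations, then ψ_H = FL ∘ ψ_L solves the Hamilton-De Donder-Weyl equations: ∂H/∂q^i ∘ ψ_H = −Σ_{A=1}^k ∂(ψ_H)^A_i/∂t^A and ∂H/∂p^A_i ∘ ψ_H = ∂(ψ_H)^i/∂t^A. -/
open scoped BigOperators

noncomputable section

section Aux

variable {n k : ℕ}

private lemma contDiff_Lv (L : Ek n k → ℝ) (hL : ContDiff ℝ (⊤ : ℕ∞) L) (A : Fin k) (i : Fin n) :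
    ContDiff ℝ (⊤ : ℕ∞) (Lv L A i) :=
  (ContinuousLinearMap.apply ℝ ℝ (Vdir n k A i)).contDiff.comp (hL.fderiv_right (by simp))

/-- decomposition of a linear functional along the coordinate basis -/
private lemma clm_decomp (T : Ek n k →L[ℝ] ℝ) (u : Ek n k) :
    T u = ∑ i, u.1 i * T (Qdir n k i) + ∑ A, ∑ i, u.2 A i * T (Vdir n k A i) := by
  have hu : u = (∑ i, u.1 i • Qdir n k i) + ∑ A, ∑ i, u.2 A i • Vdir n k A i := by
    refine Prod.ext ?_ ?_
    · funext j
      simp [Qdir, Vdir, Pi.single_apply, Finset.sum_ite_eq, Prod.fst_sum, Prod.snd_sum,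
        Finset.sum_apply, mul_ite, mul_one, mul_zero]
    · funext A j
      simp [Qdir, Vdir, Pi.single_apply, Finset.sum_ite_eq, Prod.fst_sum, Prod.snd_sum,
        Finset.sum_apply, mul_ite, mul_one, mul_zero]
  conv_lhs => rw [hu]
  simp [map_add, map_sum, map_smul, smul_eq_mul]

/-- the projection `(q,p) ↦ p^A_i` as a continuous linear map -/
private def eAi (A : Fin k) (i : Fin n) : Ek n k →L[ℝ] ℝ :=
  (ContinuousLinearMap.proj i).comp ((ContinuousLinearMap.proj A).comp
    (ContinuousLinearMap.snd ℝ (Fin n → ℝ) (Fin k → Fin n → ℝ)))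

/-- the derivative of the Legendre map -/
private def DFL (L : Ek n k → ℝ) (x : Ek n k) : Ek n k →L[ℝ] Ek n k :=
  (ContinuousLinearMap.fst ℝ (Fin n → ℝ) (Fin k → Fin n → ℝ)).prod
    (ContinuousLinearMap.pi fun A => ContinuousLinearMap.pi fun i => fderiv ℝ (Lv L A i) x)

private lemma hasFDerivAt_FL (L : Ek n k → ℝ) (hL : ContDiff ℝ (⊤ : ℕ∞) L) (x : Ek n k) :
    HasFDerivAt (FLmap L) (DFL L x) x := by
  refine HasFDerivAt.prodMk hasFDerivAt_fst ?_
  exact hasFDerivAt_pi.2 fun A => hasFDerivAt_pi.2 fun i =>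
    ((contDiff_Lv L hL A i).differentiable (by simp) x).hasFDerivAt

/-- the derivative of the energy -/
private def Denergy (L : Ek n k → ℝ) (x : Ek n k) : Ek n k →L[ℝ] ℝ :=
  (∑ A : Fin k, ∑ i : Fin n,
    (x.2 A i • fderiv ℝ (Lv L A i) x + Lv L A i x • eAi A i)) - fderiv ℝ L x

private lemma hasFDerivAt_energy (L : Ek n k → ℝ) (hL : ContDiff ℝ (⊤ : ℕ∞) L) (x : Ek n k) :
    HasFDerivAt (energy L) (Denergy L x) x := by
  have h1 : ∀ (A : Fin k) (i : Fin n), HasFDerivAt (fun y : Ek n k => y.2 A i * Lv L A i y)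
      (x.2 A i • fderiv ℝ (Lv L A i) x + Lv L A i x • eAi A i) x := by
    intro A i
    exact ((eAi A i).hasFDerivAt (x := x)).mul
      ((contDiff_Lv L hL A i).differentiable (by simp) x).hasFDerivAt
  have h2 : HasFDerivAt (fun y : Ek n k => ∑ A, ∑ i, y.2 A i * Lv L A i y)
      (∑ A : Fin k, ∑ i : Fin n,
        (x.2 A i • fderiv ℝ (Lv L A i) x + Lv L A i x • eAi A i)) x :=
    HasFDerivAt.fun_sum fun A _ => HasFDerivAt.fun_sum fun i _ => h1 A i
  exact h2.sub (hL.differentiable (by simp) x).hasFDerivAt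

/-- key computation: the two identities `(∂H/∂p^A_i) ∘ FL = v^i_A` and
`(∂H/∂q^i) ∘ FL = −∂L/∂q^i`. -/
private lemma key (L : Ek n k → ℝ) (hL : ContDiff ℝ (⊤ : ℕ∞) L)
    (hreg : ∀ x : Ek n k, (Hess L x).det ≠ 0)
    (H : Ek n k → ℝ) (hH : ContDiff ℝ (⊤ : ℕ∞) H)
    (hHL : ∀ x : Ek n k, H (FLmap L x) = energy L x) (x : Ek n k) :
    (∀ (A : Fin k) (i : Fin n), fderiv ℝ H (FLmap L x) (Vdir n k A i) = x.2 A i) ∧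
    (∀ i : Fin n, fderiv ℝ H (FLmap L x) (Qdir n k i) = - Lq L i x) := by
  have hcomp : HasFDerivAt (fun y => H (FLmap L y))
      ((fderiv ℝ H (FLmap L x)).comp (DFL L x)) x :=
    ((hH.differentiable (by simp) (FLmap L x)).hasFDerivAt).comp x (hasFDerivAt_FL L hL x)
  have hfun : (fun y => H (FLmap L y)) = energy L := funext hHL
  rw [hfun] at hcomp
  have hEq : (fderiv ℝ H (FLmap L x)).comp (DFL L x) = Denergy L x :=
    hcomp.unique (hasFDerivAt_energy L hL x)
  set T := fderiv ℝ H (FLmap L x) with hT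
  -- evaluation of both sides on an arbitrary direction
  have hev : ∀ d : Ek n k,
      ∑ i, d.1 i * T (Qdir n k i)
        + ∑ A, ∑ i, fderiv ℝ (Lv L A i) x d * T (Vdir n k A i)
      = (∑ A, ∑ i, (x.2 A i * fderiv ℝ (Lv L A i) x d + Lv L A i x * d.2 A i))
          - fderiv ℝ L x d := by
    intro d
    have := DFunLike.congr_fun hEq d
    simp only [ContinuousLinearMap.comp_apply] at this
    have hDFLd : DFL L x d = (d.1, fun A i => fderiv ℝ (Lv L A i) x d) := rfl
    rw [hDFLd, clm_decomp T] at this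
    simpa [Denergy, eAi, ContinuousLinearMap.sub_apply, ContinuousLinearMap.sum_apply,
      ContinuousLinearMap.add_apply, ContinuousLinearMap.smul_apply, smul_eq_mul] using this
  -- Step 1: the momentum equations, via regularity of the Hessian
  have hmom : ∀ (A : Fin k) (i : Fin n), T (Vdir n k A i) = x.2 A i := by
    have hmv : ((Hess L x).transpose).mulVec
        (fun p : Fin k × Fin n => T (Vdir n k p.1 p.2) - x.2 p.1 p.2) = 0 := by
      funext q
      obtain ⟨B, m⟩ := q
      have h := hev (Vdir n k B m)
      have h1 : ∀ A i, fderiv ℝ (Lv L A i) x (Vdir n k B m) = Hess L x (A, i) (B, m) := by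
        intro A i; rfl
      have h2 : fderiv ℝ L x (Vdir n k B m) = Lv L B m x := rfl
      have h3 : ∀ A i, (Vdir n k B m).2 A i
          = (Pi.single B (Pi.single m (1:ℝ)) : Fin k → Fin n → ℝ) A i := fun A i => rfl
      have h4 : (Vdir n k B m).1 = 0 := rfl
      simp only [h1, h2, h3, h4, Pi.zero_apply, zero_mul, Finset.sum_const_zero, zero_add,
        mul_add, Finset.sum_add_distrib] at h
      have h5 : ∑ A, ∑ i, Lv L A i x
          * (Pi.single B (Pi.single m (1:ℝ)) : Fin k → Fin n → ℝ) A i = Lv L B m x := by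
        simp [Pi.single_apply, ite_apply, mul_ite, Finset.sum_ite_eq, Finset.sum_ite_eq']
      rw [h5] at h
      have h6 : ∑ A, ∑ i, Hess L x (A, i) (B, m) * T (Vdir n k A i)
          = ∑ A, ∑ i, x.2 A i * Hess L x (A, i) (B, m) := by
        rw [h, add_sub_cancel_right]
      show (∑ p : Fin k × Fin n, (Hess L x).transpose (B, m) p
        * (T (Vdir n k p.1 p.2) - x.2 p.1 p.2)) = (0 : ℝ)
      rw [Fintype.sum_prod_type]
      simp only [Matrix.transpose_apply, mul_sub, Finset.sum_sub_distrib]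
      rw [sub_eq_zero, h6]
      apply Finset.sum_congr rfl; intro A _; apply Finset.sum_congr rfl; intro i _; ring
    have hdet : ((Hess L x).transpose).det ≠ 0 := by rw [Matrix.det_transpose]; exact hreg x
    have := Matrix.eq_zero_of_mulVec_eq_zero hdet hmv
    intro A i
    have := congrFun this (A, i)
    simpa [sub_eq_zero] using this
  refine ⟨hmom, ?_⟩
  -- Step 2: the position equations
  intro j
  have h := hev (Qdir n k j)
  have h1 : (Qdir n k j).1 = (Pi.single j (1:ℝ) : Fin n → ℝ) := rfl
  have h2 : (Qdir n k j).2 = 0 := rfl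
  have h3 : fderiv ℝ L x (Qdir n k j) = Lq L j x := rfl
  simp only [h1, h2, h3, Pi.zero_apply, mul_zero, add_zero] at h
  have h4 : ∑ i, (Pi.single j (1:ℝ) : Fin n → ℝ) i * T (Qdir n k i) = T (Qdir n k j) := by
    simp [Pi.single_apply, Finset.sum_ite_eq]
  rw [h4] at h
  have h5 : ∑ A, ∑ i, fderiv ℝ (Lv L A i) x (Qdir n k j) * T (Vdir n k A i)
      = ∑ A, ∑ i, x.2 A i * fderiv ℝ (Lv L A i) x (Qdir n k j) := by
    apply Finset.sum_congr rfl; intro A _; apply Finset.sum_congr rfl; intro i _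
    rw [hmom A i]; ring
  rw [h5] at h
  linarith

end Aux

/-- if `ψ_L` is the first prolongation of a solution `φ` of the Euler–Lagrange
equations, then `ψ_H = FL ∘ ψ_L` solves the Hamilton–De Donder–Weyl equations. -/
theorem prolongation_gives_HDW_solution (n k : ℕ) (L : Ek n k → ℝ) (hL : ContDiff ℝ (⊤ : ℕ∞) L)
    (hreg : ∀ x : Ek n k, (Hess L x).det ≠ 0)
    (H : Ek n k → ℝ) (hH : ContDiff ℝ (⊤ : ℕ∞) H)
    (hHL : ∀ x : Ek n k, H (FLmap L x) = energy L x)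
    (φ : (Fin k → ℝ) → Fin n → ℝ) (ψL : (Fin k → ℝ) → Ek n k)
    (hψ : ∀ t, ψL t = (φ t, fun A i => fderiv ℝ (fun s => φ s i) t (Pi.single A 1)))
    (hdiff : Differentiable ℝ ψL)
    (hEL : ∀ (t : Fin k → ℝ) (i : Fin n),
      ∑ A, fderiv ℝ (fun s => Lv L A i (ψL s)) t (Pi.single A 1) = Lq L i (ψL t)) :
    (∀ (t : Fin k → ℝ) (i : Fin n),
      fderiv ℝ H (FLmap L (ψL t)) (Qdir n k i)
        = - ∑ A, fderiv ℝ (fun s => Lv L A i (ψL s)) t (Pi.single A 1)) ∧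
    (∀ (t : Fin k → ℝ) (A : Fin k) (i : Fin n),
      fderiv ℝ H (FLmap L (ψL t)) (Vdir n k A i)
        = fderiv ℝ (fun s => φ s i) t (Pi.single A 1)) := by
  constructor
  · intro t i
    rw [hEL t i]
    exact (key L hL hreg H hH hHL (ψL t)).2 i
  · intro t A i
    rw [(key L hL hreg H hH hHL (ψL t)).1 A i, hψ t]

end
end
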